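/- arXiv:1210.4609 — 6 statements merged into one kernel-verified Lean document; each statement's English description precedes it below -/
import Mathlib

section
/- Let F, G : Ω → ℂ be continuously differentiable on an open set Ω ⊆ ℂ with F·conj(G) − conj(F)·G ≠ 0 everywhere, let φ, ψ : Ω → ℝ be real-valued continuously differentiable functions, and set W = φ·F + ψ·G. Then ∂_z W − A_{(F,G)}·W − B_{(F,G)}·conj(W) = (∂_z φ)·F + (∂_z ψ)·G at every point of Ω. -/
/-- The operator `∂_z = ∂_x - i·∂_y` (without the customary factor 1/2). -/
noncomputable def pdz (W : ℂ → ℂ) (z : ℂ) : ℂ :=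
  fderiv ℝ W z 1 - Complex.I * fderiv ℝ W z Complex.I

/-- The operator `∂_z̄ = ∂_x + i·∂_y` (without the customary factor 1/2). -/
noncomputable def pdzbar (W : ℂ → ℂ) (z : ℂ) : ℂ :=
  fderiv ℝ W z 1 + Complex.I * fderiv ℝ W z Complex.I

/-- Characteristic coefficient `A_{(F,G)}`. -/
noncomputable def coefA (F G : ℂ → ℂ) (z : ℂ) : ℂ :=
  -(((starRingEnd ℂ) (F z) * pdz G z - (starRingEnd ℂ) (G z) * pdz F z) /
    (F z * (starRingEnd ℂ) (G z) - (starRingEnd ℂ) (F z) * G z))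

/-- Characteristic coefficient `B_{(F,G)}`. -/
noncomputable def coefB (F G : ℂ → ℂ) (z : ℂ) : ℂ :=
  (F z * pdz G z - G z * pdz F z) /
    (F z * (starRingEnd ℂ) (G z) - (starRingEnd ℂ) (F z) * G z)

/-- Characteristic coefficient `a_{(F,G)}`. -/
noncomputable def coefa (F G : ℂ → ℂ) (z : ℂ) : ℂ :=
  -(((starRingEnd ℂ) (F z) * pdzbar G z - (starRingEnd ℂ) (G z) * pdzbar F z) /
    (F z * (starRingEnd ℂ) (G z) - (starRingEnd ℂ) (F z) * G z))

/-- Characteristic coefficient `b_{(F,G)}`. -/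
noncomputable def coefb (F G : ℂ → ℂ) (z : ℂ) : ℂ :=
  (F z * pdzbar G z - G z * pdzbar F z) /
    (F z * (starRingEnd ℂ) (G z) - (starRingEnd ℂ) (F z) * G z)


lemma pdz_mul (f g : ℂ → ℂ) (z : ℂ) (hf : DifferentiableAt ℝ f z)
    (hg : DifferentiableAt ℝ g z) :
    pdz (fun w => f w * g w) z = pdz f z * g z + f z * pdz g z := by
  unfold pdz
  rw [fderiv_fun_mul hf hg]
  simp only [ContinuousLinearMap.add_apply, ContinuousLinearMap.smul_apply, smul_eq_mul]
  ring

lemma pdz_add (f g : ℂ → ℂ) (z : ℂ) (hf : DifferentiableAt ℝ f z)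
    (hg : DifferentiableAt ℝ g z) :
    pdz (fun w => f w + g w) z = pdz f z + pdz g z := by
  unfold pdz
  rw [fderiv_fun_add hf hg]
  simp only [ContinuousLinearMap.add_apply]
  ring

/-- For `W = φ·F + ψ·G` with real-valued `C¹` coefficient functions φ, ψ,
one has `∂_z W − A·W − B·conj W = (∂_z φ)·F + (∂_z ψ)·G` on Ω. -/
theorem FG_derivative_formula (Ω : Set ℂ) (hΩ : IsOpen Ω) (F G : ℂ → ℂ)
    (hF : ContDiffOn ℝ 1 F Ω) (hG : ContDiffOn ℝ 1 G Ω)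
    (hne : ∀ z ∈ Ω, F z * (starRingEnd ℂ) (G z) - (starRingEnd ℂ) (F z) * G z ≠ 0)
    (φ ψ : ℂ → ℝ) (hφ : ContDiffOn ℝ 1 φ Ω) (hψ : ContDiffOn ℝ 1 ψ Ω)
    (W : ℂ → ℂ) (hW : W = fun w => ((φ w : ℝ) : ℂ) * F w + ((ψ w : ℝ) : ℂ) * G w) :
    ∀ z ∈ Ω,
      pdz W z - coefA F G z * W z - coefB F G z * (starRingEnd ℂ) (W z) =
        pdz (fun w => ((φ w : ℝ) : ℂ)) z * F z + pdz (fun w => ((ψ w : ℝ) : ℂ)) z * G z := by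
  intro z hz
  have hnz := hne z hz
  have hFd : DifferentiableAt ℝ F z :=
    (hF.contDiffAt (hΩ.mem_nhds hz)).differentiableAt one_ne_zero
  have hGd : DifferentiableAt ℝ G z :=
    (hG.contDiffAt (hΩ.mem_nhds hz)).differentiableAt one_ne_zero
  have hφd : DifferentiableAt ℝ (fun w => ((φ w : ℝ) : ℂ)) z :=
    Complex.ofRealCLM.differentiable.differentiableAt.comp z
      ((hφ.contDiffAt (hΩ.mem_nhds hz)).differentiableAt one_ne_zero)
  have hψd : DifferentiableAt ℝ (fun w => ((ψ w : ℝ) : ℂ)) z :=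
    Complex.ofRealCLM.differentiable.differentiableAt.comp z
      ((hψ.contDiffAt (hΩ.mem_nhds hz)).differentiableAt one_ne_zero)
  have hW1 : pdz W z = pdz (fun w => ((φ w : ℝ) : ℂ)) z * F z + (φ z : ℂ) * pdz F z
      + (pdz (fun w => ((ψ w : ℝ) : ℂ)) z * G z + (ψ z : ℂ) * pdz G z) := by
    rw [hW, pdz_add _ _ z (hφd.fun_mul hFd) (hψd.fun_mul hGd),
      pdz_mul _ _ z hφd hFd, pdz_mul _ _ z hψd hGd]
  have hW2 : W z = (φ z : ℂ) * F z + (ψ z : ℂ) * G z := by rw [hW]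
  have hW3 : (starRingEnd ℂ) (W z)
      = (φ z : ℂ) * (starRingEnd ℂ) (F z) + (ψ z : ℂ) * (starRingEnd ℂ) (G z) := by
    rw [hW]; simp [map_add, map_mul, Complex.conj_ofReal]
  rw [hW1, hW3, hW2]
  unfold coefA coefB
  have hnz' : F z * (starRingEnd ℂ) (G z) - G z * (starRingEnd ℂ) (F z) ≠ 0 := by
    rwa [mul_comm (G z)]
  field_simp
  ring
end

section
/- Let F, G : Ω → ℂ be continuously differentiable on an open set Ω ⊆ ℂ with F·conj(G) − conj(F)·G ≠ 0 everywhere, let φ, ψ : Ω → ℝ be real-valued continuously differentiable functions, and set W = φ·F + ψ·G. Then ∂_z̄ W − a_{(F,G)}·W − b_{(F,G)}·conj(W) = (∂_z̄ φ)·F + (∂_z̄ ψ)·G at every point of Ω. In particular, W satisfies the Vekua equation ∂_z̄W − a_{(F,G)}W − b_{(F,G)}·conj(W) = 0 if and only if (∂_z̄ φ)·F + (∂_z̄ ψ)·G = 0. -/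

lemma pdzbar_mul (f g : ℂ → ℂ) (z : ℂ) (hf : DifferentiableAt ℝ f z)
    (hg : DifferentiableAt ℝ g z) :
    pdzbar (fun w => f w * g w) z = f z * pdzbar g z + g z * pdzbar f z := by
  unfold pdzbar
  rw [fderiv_fun_mul hf hg]
  simp only [ContinuousLinearMap.add_apply, ContinuousLinearMap.smul_apply, smul_eq_mul]
  ring

lemma pdzbar_add (f g : ℂ → ℂ) (z : ℂ) (hf : DifferentiableAt ℝ f z)
    (hg : DifferentiableAt ℝ g z) :
    pdzbar (fun w => f w + g w) z = pdzbar f z + pdzbar g z := by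
  unfold pdzbar
  rw [fderiv_fun_add hf hg]
  simp only [ContinuousLinearMap.add_apply]
  ring

/-- For `W = φ·F + ψ·G` with real-valued `C¹` coefficient functions φ, ψ,
one has `∂_z̄ W − a·W − b·conj W = (∂_z̄ φ)·F + (∂_z̄ ψ)·G` on Ω; in particular W satisfies
the Vekua equation iff `(∂_z̄ φ)·F + (∂_z̄ ψ)·G = 0`. -/
theorem Vekua_existence_criterion (Ω : Set ℂ) (hΩ : IsOpen Ω) (F G : ℂ → ℂ)
    (hF : ContDiffOn ℝ 1 F Ω) (hG : ContDiffOn ℝ 1 G Ω)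
    (hne : ∀ z ∈ Ω, F z * (starRingEnd ℂ) (G z) - (starRingEnd ℂ) (F z) * G z ≠ 0)
    (φ ψ : ℂ → ℝ) (hφ : ContDiffOn ℝ 1 φ Ω) (hψ : ContDiffOn ℝ 1 ψ Ω)
    (W : ℂ → ℂ) (hW : W = fun w => ((φ w : ℝ) : ℂ) * F w + ((ψ w : ℝ) : ℂ) * G w) :
    ∀ z ∈ Ω,
      (pdzbar W z - coefa F G z * W z - coefb F G z * (starRingEnd ℂ) (W z) =
        pdzbar (fun w => ((φ w : ℝ) : ℂ)) z * F z + pdzbar (fun w => ((ψ w : ℝ) : ℂ)) z * G z) ∧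
      ((pdzbar W z - coefa F G z * W z - coefb F G z * (starRingEnd ℂ) (W z) = 0 ↔
        pdzbar (fun w => ((φ w : ℝ) : ℂ)) z * F z + pdzbar (fun w => ((ψ w : ℝ) : ℂ)) z * G z = 0)) := by
  intro z hz
  have hFz : DifferentiableAt ℝ F z := (hF.contDiffAt (hΩ.mem_nhds hz)).differentiableAt one_ne_zero
  have hGz : DifferentiableAt ℝ G z := (hG.contDiffAt (hΩ.mem_nhds hz)).differentiableAt one_ne_zero
  have hφz : DifferentiableAt ℝ (fun w => ((φ w : ℝ) : ℂ)) z :=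
    Complex.ofRealCLM.differentiable.differentiableAt.comp z
      ((hφ.contDiffAt (hΩ.mem_nhds hz)).differentiableAt one_ne_zero)
  have hψz : DifferentiableAt ℝ (fun w => ((ψ w : ℝ) : ℂ)) z :=
    Complex.ofRealCLM.differentiable.differentiableAt.comp z
      ((hψ.contDiffAt (hΩ.mem_nhds hz)).differentiableAt one_ne_zero)
  have hkey : pdzbar W z =
      pdzbar (fun w => ((φ w : ℝ) : ℂ)) z * F z + (φ z : ℂ) * pdzbar F z +
      (pdzbar (fun w => ((ψ w : ℝ) : ℂ)) z * G z + (ψ z : ℂ) * pdzbar G z) := by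
    rw [hW, pdzbar_add _ _ z (hφz.fun_mul hFz) (hψz.fun_mul hGz),
      pdzbar_mul _ _ z hφz hFz, pdzbar_mul _ _ z hψz hGz]
    ring
  have hWconj : (starRingEnd ℂ) (W z) =
      (φ z : ℂ) * (starRingEnd ℂ) (F z) + (ψ z : ℂ) * (starRingEnd ℂ) (G z) := by
    rw [hW]; simp [Complex.conj_ofReal]
  have hWz : W z = (φ z : ℂ) * F z + (ψ z : ℂ) * G z := by rw [hW]
  have hD := hne z hz
  have main : pdzbar W z - coefa F G z * W z - coefb F G z * (starRingEnd ℂ) (W z) =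
      pdzbar (fun w => ((φ w : ℝ) : ℂ)) z * F z + pdzbar (fun w => ((ψ w : ℝ) : ℂ)) z * G z := by
    rw [hkey, hWconj, hWz, coefa, coefb]
    have hD' : F z * (starRingEnd ℂ) (G z) - G z * (starRingEnd ℂ) (F z) ≠ 0 := by
      rw [mul_comm (G z)]; exact hD
    field_simp
    ring
  exact ⟨main, by rw [main]⟩
end

section
/- Let p₁ : ℝ → ℝ and p₂ : ℝ → ℝ be positive continuously differentiable functions, and regard p(x,y) = p₁(x)p₂(y) as a function on ℝ². Define the pairs F_odd(x,y) = p₁(x)p₂(y), G_odd(x,y) = i/(p₁(x)p₂(y)), and F_even(x,y) = p₂(y)/p₁(x), G_even(x,y) = i·p₁(x)/p₂(y). Then (F_even, G_even) is a successor of (F_odd, G_odd) and (F_odd, G_odd) is a successor of (F_even, G_even); that is, B_{(F_even,G_even)} = −b_{(F_odd,G_odd)} and B_{(F_odd,G_odd)} = −b_{(F_even,G_even)} hold at every point. Consequently the generating pair (p, i/p) is embedded into a periodic generating sequence with period 2, obtained by alternating these two pairs. -/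
set_option maxHeartbeats 1000000

lemma pd_eval' {f : ℂ → ℂ} {D : ℂ →L[ℝ] ℂ} {z : ℂ} (h : HasFDerivAt f D z) :
    pdz f z = D 1 - Complex.I * D Complex.I ∧
      pdzbar f z = D 1 + Complex.I * D Complex.I := by
  constructor <;> simp only [pdz, pdzbar, h.fderiv]

/-- Both successor identities at a fixed point `z`. -/
lemma succ_both (p₁ p₂ : ℝ → ℝ) (h₁ : ContDiff ℝ 1 p₁) (h₂ : ContDiff ℝ 1 p₂)
    (hp₁ : ∀ x, 0 < p₁ x) (hp₂ : ∀ y, 0 < p₂ y) (z : ℂ) :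
    coefB (fun w => ((p₂ w.im / p₁ w.re : ℝ) : ℂ))
        (fun w => Complex.I * ((p₁ w.re / p₂ w.im : ℝ) : ℂ)) z
      = - coefb (fun w => ((p₁ w.re * p₂ w.im : ℝ) : ℂ))
        (fun w => Complex.I / ((p₁ w.re * p₂ w.im : ℝ) : ℂ)) z ∧
    coefB (fun w => ((p₁ w.re * p₂ w.im : ℝ) : ℂ))
        (fun w => Complex.I / ((p₁ w.re * p₂ w.im : ℝ) : ℂ)) z
      = - coefb (fun w => ((p₂ w.im / p₁ w.re : ℝ) : ℂ))
        (fun w => Complex.I * ((p₁ w.re / p₂ w.im : ℝ) : ℂ)) z := by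
  have rFo : (fun w : ℂ => ((p₁ w.re * p₂ w.im : ℝ) : ℂ))
      = fun w : ℂ => ((p₁ w.re : ℝ) : ℂ) * ((p₂ w.im : ℝ) : ℂ) := by
    funext w; push_cast; ring
  have rGo : (fun w : ℂ => Complex.I / ((p₁ w.re * p₂ w.im : ℝ) : ℂ))
      = fun w : ℂ => Complex.I * (((p₁ w.re : ℝ) : ℂ) * ((p₂ w.im : ℝ) : ℂ))⁻¹ := by
    funext w; push_cast; rw [div_eq_mul_inv]
  have rFe : (fun w : ℂ => ((p₂ w.im / p₁ w.re : ℝ) : ℂ))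
      = fun w : ℂ => ((p₂ w.im : ℝ) : ℂ) * (((p₁ w.re : ℝ) : ℂ))⁻¹ := by
    funext w; push_cast; rw [div_eq_mul_inv]
  have rGe : (fun w : ℂ => Complex.I * ((p₁ w.re / p₂ w.im : ℝ) : ℂ))
      = fun w : ℂ => Complex.I * (((p₁ w.re : ℝ) : ℂ) * (((p₂ w.im : ℝ) : ℂ))⁻¹) := by
    funext w; push_cast; rw [div_eq_mul_inv]
  rw [rFo, rGo, rFe, rGe]
  have ha : ((p₁ z.re : ℝ) : ℂ) ≠ 0 := by exact_mod_cast (hp₁ z.re).ne'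
  have hb : ((p₂ z.im : ℝ) : ℂ) ≠ 0 := by exact_mod_cast (hp₂ z.im).ne'
  have hA : HasFDerivAt (fun w : ℂ => ((p₁ w.re : ℝ) : ℂ))
      (Complex.ofRealCLM.comp ((deriv p₁ z.re) • Complex.reCLM)) z :=
    Complex.ofRealCLM.hasFDerivAt.comp z
      (((h₁.differentiable one_ne_zero) z.re).hasDerivAt.comp_hasFDerivAt z Complex.reCLM.hasFDerivAt)
  have hB : HasFDerivAt (fun w : ℂ => ((p₂ w.im : ℝ) : ℂ))
      (Complex.ofRealCLM.comp ((deriv p₂ z.im) • Complex.imCLM)) z :=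
    Complex.ofRealCLM.hasFDerivAt.comp z
      (((h₂.differentiable one_ne_zero) z.im).hasDerivAt.comp_hasFDerivAt z Complex.imCLM.hasFDerivAt)
  have hAB := hA.fun_mul hB
  have hABne : ((p₁ z.re : ℝ) : ℂ) * ((p₂ z.im : ℝ) : ℂ) ≠ 0 := mul_ne_zero ha hb
  have hABinv := (hasFDerivAt_inv' (𝕜 := ℝ) hABne).comp z hAB
  simp only [Function.comp_def] at hABinv
  have hGo := hABinv.const_mul Complex.I
  have hAinv := (hasFDerivAt_inv' (𝕜 := ℝ) ha).comp z hA
  have hBinv := (hasFDerivAt_inv' (𝕜 := ℝ) hb).comp z hB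
  simp only [Function.comp_def] at hAinv hBinv
  have hFe := hB.fun_mul hAinv
  have hGe := (hA.fun_mul hBinv).const_mul Complex.I
  set a : ℂ := ((p₁ z.re : ℝ) : ℂ) with hav
  set b : ℂ := ((p₂ z.im : ℝ) : ℂ) with hbv
  set a' : ℂ := ((deriv p₁ z.re : ℝ) : ℂ) with hav'
  set b' : ℂ := ((deriv p₂ z.im : ℝ) : ℂ) with hbv'
  have e1 : pdz (fun w : ℂ => ((p₁ w.re : ℝ) : ℂ) * ((p₂ w.im : ℝ) : ℂ)) z
      = a' * b - Complex.I * (a * b') := by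
    rw [(pd_eval' hAB).1]; simp [a, b, a', b']; ring
  have e1' : pdzbar (fun w : ℂ => ((p₁ w.re : ℝ) : ℂ) * ((p₂ w.im : ℝ) : ℂ)) z
      = a' * b + Complex.I * (a * b') := by
    rw [(pd_eval' hAB).2]; simp [a, b, a', b']; ring
  have e2 : pdz (fun w : ℂ => Complex.I * (((p₁ w.re : ℝ) : ℂ) * ((p₂ w.im : ℝ) : ℂ))⁻¹) z
      = -Complex.I * a' / (a ^ 2 * b) - b' / (a * b ^ 2) := by
    rw [(pd_eval' hGo).1]; simp [a, b, a', b']; field_simp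
    try ring_nf
    try simp only [Complex.I_sq]
    try ring
  have e2' : pdzbar (fun w : ℂ => Complex.I * (((p₁ w.re : ℝ) : ℂ) * ((p₂ w.im : ℝ) : ℂ))⁻¹) z
      = -Complex.I * a' / (a ^ 2 * b) + b' / (a * b ^ 2) := by
    rw [(pd_eval' hGo).2]; simp [a, b, a', b']; field_simp
    try ring_nf
    try simp only [Complex.I_sq]
    try ring
  have e3 : pdz (fun w : ℂ => ((p₂ w.im : ℝ) : ℂ) * (((p₁ w.re : ℝ) : ℂ))⁻¹) z
      = -(b * a') / a ^ 2 - Complex.I * (b' / a) := by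
    rw [(pd_eval' hFe).1]; simp [a, b, a', b']; field_simp
    try ring_nf
    try simp only [Complex.I_sq]
    try ring
  have e3' : pdzbar (fun w : ℂ => ((p₂ w.im : ℝ) : ℂ) * (((p₁ w.re : ℝ) : ℂ))⁻¹) z
      = -(b * a') / a ^ 2 + Complex.I * (b' / a) := by
    rw [(pd_eval' hFe).2]; simp [a, b, a', b']; field_simp
    try ring_nf
    try simp only [Complex.I_sq]
    try ring
  have e4 : pdz (fun w : ℂ => Complex.I * (((p₁ w.re : ℝ) : ℂ) * (((p₂ w.im : ℝ) : ℂ))⁻¹)) z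
      = Complex.I * (a' / b) - a * b' / b ^ 2 := by
    rw [(pd_eval' hGe).1]; simp [a, b, a', b']; field_simp
    try ring_nf
    try simp only [Complex.I_sq]
    try ring
  have e4' : pdzbar (fun w : ℂ => Complex.I * (((p₁ w.re : ℝ) : ℂ) * (((p₂ w.im : ℝ) : ℂ))⁻¹)) z
      = Complex.I * (a' / b) + a * b' / b ^ 2 := by
    rw [(pd_eval' hGe).2]; simp [a, b, a', b']; field_simp
    try ring_nf
    try simp only [Complex.I_sq]
    try ring
  have hne : (-(2 * Complex.I) : ℂ) ≠ 0 := by simp [Complex.I_ne_zero]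
  constructor
  · simp only [coefB, coefb, e1', e2', e3, e4]
    simp only [Complex.mul_conj, map_mul, map_inv₀, Complex.conj_ofReal, Complex.conj_I]
    rw [← hav, ← hbv]
    have hd1 : b * a⁻¹ * (-Complex.I * (a * b⁻¹)) - b * a⁻¹ * (Complex.I * (a * b⁻¹))
        = -(2 * Complex.I) := by field_simp; ring
    have hd2 : a * b * (-Complex.I * (a * b)⁻¹) - a * b * (Complex.I * (a * b)⁻¹)
        = -(2 * Complex.I) := by field_simp; ring
    rw [hd1, hd2, ← neg_div, div_eq_div_iff hne hne]
    field_simp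
    try ring_nf
    try simp only [Complex.I_sq]
    try ring
  · simp only [coefB, coefb, e1, e2, e3', e4']
    simp only [Complex.mul_conj, map_mul, map_inv₀, Complex.conj_ofReal, Complex.conj_I]
    rw [← hav, ← hbv]
    have hd1 : b * a⁻¹ * (-Complex.I * (a * b⁻¹)) - b * a⁻¹ * (Complex.I * (a * b⁻¹))
        = -(2 * Complex.I) := by field_simp; ring
    have hd2 : a * b * (-Complex.I * (a * b)⁻¹) - a * b * (Complex.I * (a * b)⁻¹)
        = -(2 * Complex.I) := by field_simp; ring
    rw [hd1, hd2, ← neg_div, div_eq_div_iff hne hne]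
    field_simp
    try ring_nf
    try simp only [Complex.I_sq]
    try ring

/-- For positive `C¹` functions p₁(x), p₂(y), the pairs
`(p₁p₂, i/(p₁p₂))` ("odd") and `(p₂/p₁, i·p₁/p₂)` ("even") are successors of each other:
`B_{even} = −b_{odd}` and `B_{odd} = −b_{even}` at every point.  Consequently the generating
pair `(p, i/p)` with `p = p₁p₂` is embedded into a periodic generating sequence of period 2,
obtained by alternating these two pairs. -/
theorem separable_generating_sequence_period_two (p₁ p₂ : ℝ → ℝ)
    (h₁ : ContDiff ℝ 1 p₁) (h₂ : ContDiff ℝ 1 p₂)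
    (hp₁ : ∀ x, 0 < p₁ x) (hp₂ : ∀ y, 0 < p₂ y)
    (Fodd Godd Feven Geven : ℂ → ℂ)
    (hFo : Fodd = fun z => ((p₁ z.re * p₂ z.im : ℝ) : ℂ))
    (hGo : Godd = fun z => Complex.I / ((p₁ z.re * p₂ z.im : ℝ) : ℂ))
    (hFe : Feven = fun z => ((p₂ z.im / p₁ z.re : ℝ) : ℂ))
    (hGe : Geven = fun z => Complex.I * ((p₁ z.re / p₂ z.im : ℝ) : ℂ)) :
    (∀ z : ℂ, coefB Feven Geven z = - coefb Fodd Godd z) ∧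
    (∀ z : ℂ, coefB Fodd Godd z = - coefb Feven Geven z) ∧
    ∃ seq : ℤ → (ℂ → ℂ) × (ℂ → ℂ),
      seq 0 = (Fodd, Godd) ∧
      (∀ m : ℤ, ∀ z : ℂ,
        coefB (seq (m + 1)).1 (seq (m + 1)).2 z = - coefb (seq m).1 (seq m).2 z) ∧
      (∀ m : ℤ, seq (m + 2) = seq m) := by
  subst hFo hGo hFe hGe
  refine ⟨fun z => (succ_both p₁ p₂ h₁ h₂ hp₁ hp₂ z).1,
    fun z => (succ_both p₁ p₂ h₁ h₂ hp₁ hp₂ z).2,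
    fun m => if m % 2 = 0 then
        ((fun z => ((p₁ z.re * p₂ z.im : ℝ) : ℂ)),
         (fun z => Complex.I / ((p₁ z.re * p₂ z.im : ℝ) : ℂ)))
      else
        ((fun z => ((p₂ z.im / p₁ z.re : ℝ) : ℂ)),
         (fun z => Complex.I * ((p₁ z.re / p₂ z.im : ℝ) : ℂ))),
    by norm_num, ?_, ?_⟩
  · intro m z
    rcases Int.emod_two_eq_zero_or_one m with h | h
    · have h' : (m + 1) % 2 = 1 := by omega
      simp only [h, h', reduceIte]
      exact (succ_both p₁ p₂ h₁ h₂ hp₁ hp₂ z).1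
    · have h' : (m + 1) % 2 = 0 := by omega
      simp only [h, h', reduceIte]
      exact (succ_both p₁ p₂ h₁ h₂ hp₁ hp₂ z).2
  · intro m
    have : (m + 2) % 2 = m % 2 := by omega
    simp only [this]
end

section
/- Let p₂ : ℝ → ℝ be a positive continuously differentiable function, and define on ℝ² the pair F(x,y) = p₂(y), G(x,y) = i/p₂(y). Then (F, G) is its own successor: B_{(F,G)} = −b_{(F,G)} at every point. Consequently the generating pair (F, G) is embedded into a periodic generating sequence with period 1. -/
/-- A function of the form `g ∘ im` has vanishing x-derivative. -/
lemma fderiv_comp_im_one {g : ℝ → ℂ} {z : ℂ} (hg : DifferentiableAt ℝ g z.im) :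
    fderiv ℝ (fun w : ℂ => g w.im) z 1 = 0 := by
  have him : HasFDerivAt Complex.im (Complex.imCLM : ℂ →L[ℝ] ℝ) z :=
    Complex.imCLM.hasFDerivAt
  have hgd : HasFDerivAt g
      ((1 : ℝ →L[ℝ] ℝ).smulRight (deriv g z.im)) z.im :=
    hg.hasDerivAt.hasFDerivAt
  have hcomp : HasFDerivAt (fun w : ℂ => g w.im)
      (((1 : ℝ →L[ℝ] ℝ).smulRight (deriv g z.im)).comp
        (Complex.imCLM : ℂ →L[ℝ] ℝ)) z := hgd.comp z him
  rw [hcomp.fderiv]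
  simp

/-- For a positive `C¹` function p₂(y), the pair `F = p₂(y)`, `G = i/p₂(y)`
is its own successor: `B_{(F,G)} = −b_{(F,G)}` at every point.  Consequently `(F, G)` is
embedded into a periodic generating sequence of period 1. -/
theorem generating_sequence_period_one (p₂ : ℝ → ℝ)
    (h₂ : ContDiff ℝ 1 p₂) (hp₂ : ∀ y, 0 < p₂ y)
    (F G : ℂ → ℂ)
    (hF : F = fun z => ((p₂ z.im : ℝ) : ℂ))
    (hG : G = fun z => Complex.I / ((p₂ z.im : ℝ) : ℂ)) :
    (∀ z : ℂ, coefB F G z = - coefb F G z) ∧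
    ∃ seq : ℤ → (ℂ → ℂ) × (ℂ → ℂ),
      seq 0 = (F, G) ∧
      (∀ m : ℤ, ∀ z : ℂ,
        coefB (seq (m + 1)).1 (seq (m + 1)).2 z = - coefb (seq m).1 (seq m).2 z) ∧
      (∀ m : ℤ, seq (m + 1) = seq m) := by
  have hp₂d : Differentiable ℝ p₂ := h₂.differentiable one_ne_zero
  have key : ∀ z : ℂ, coefB F G z = - coefb F G z := by
    intro z
    have hFx : fderiv ℝ F z 1 = 0 := by
      rw [hF]
      exact fderiv_comp_im_one
        ((Complex.ofRealCLM.differentiable.comp hp₂d) z.im)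
    have hGx : fderiv ℝ G z 1 = 0 := by
      rw [hG]
      exact fderiv_comp_im_one ((differentiableAt_const Complex.I).div
        ((Complex.ofRealCLM.differentiable.comp hp₂d) z.im)
        (by simpa using (hp₂ z.im).ne'))
    simp only [coefB, coefb, pdz, pdzbar, hFx, hGx, ← neg_div]
    ring_nf
  refine ⟨key, fun _ => (F, G), rfl, fun m z => key z, fun m => rfl⟩
end

section
/- Let σ₁ : ℝ → ℝ and σ₂ : ℝ → ℝ be positive continuously differentiable functions, set σ(x,y) = σ₁(x)σ₂(y), and let u : ℝ² → ℝ be twice continuously differentiable and satisfy the two-dimensional electrical impedance equation ∇·(σ∇u) = 0, i.e. ∂_x(σ ∂_x u) + ∂_y(σ ∂_y u) = 0. Define W = √σ·∂_x u − i√σ·∂_y u and p = √(σ₂)/√(σ₁). Then W satisfies the Vekua equation ∂_z̄ W − ((∂_z̄ p)/p)·conj(W) = 0 at every point of ℝ². -/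
/-- Partial derivative `∂_x` of a real-valued function on the plane `ℂ ≅ ℝ²`. -/
noncomputable def px (f : ℂ → ℝ) (z : ℂ) : ℝ := fderiv ℝ f z 1

/-- Partial derivative `∂_y` of a real-valued function on the plane `ℂ ≅ ℝ²`. -/
noncomputable def py (f : ℂ → ℝ) (z : ℂ) : ℝ := fderiv ℝ f z Complex.I

set_option maxHeartbeats 2000000 in
/-- If `σ(x,y) = σ₁(x)σ₂(y)` is a positive separable-variables conductivity and
`u` is a `C²` solution of the electrical impedance equation `∂_x(σ ∂_x u) + ∂_y(σ ∂_y u) = 0`,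
then `W = √σ·∂_x u − i√σ·∂_y u` satisfies the Vekua equation
`∂_z̄ W − ((∂_z̄ p)/p)·conj W = 0`, where `p = √σ₂/√σ₁`. -/
theorem impedance_to_Vekua (σ₁ σ₂ : ℝ → ℝ)
    (h₁ : ContDiff ℝ 1 σ₁) (h₂ : ContDiff ℝ 1 σ₂)
    (hσ₁ : ∀ x, 0 < σ₁ x) (hσ₂ : ∀ y, 0 < σ₂ y)
    (σ : ℂ → ℝ) (hσ : σ = fun z => σ₁ z.re * σ₂ z.im)
    (u : ℂ → ℝ) (hu : ContDiff ℝ 2 u)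
    (himp : ∀ z : ℂ, px (fun w => σ w * px u w) z + py (fun w => σ w * py u w) z = 0)
    (W : ℂ → ℂ)
    (hW : W = fun z => ((Real.sqrt (σ z) * px u z : ℝ) : ℂ)
      - Complex.I * ((Real.sqrt (σ z) * py u z : ℝ) : ℂ))
    (p : ℂ → ℝ) (hp : p = fun z => Real.sqrt (σ₂ z.im) / Real.sqrt (σ₁ z.re)) :
    ∀ z : ℂ,
      pdzbar W z
        - (pdzbar (fun w => ((p w : ℝ) : ℂ)) z / ((p z : ℝ) : ℂ)) * (starRingEnd ℂ) (W z)
      = 0 := by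
  subst hσ hW hp
  intro z
  simp only [px, py, pdzbar] at himp ⊢
  have hs1 := hσ₁ z.re
  have hs2 := hσ₂ z.im
  have hs : (0:ℝ) < σ₁ z.re * σ₂ z.im := mul_pos hs1 hs2
  set a1 : ℝ := deriv σ₁ z.re with ha1
  set a2 : ℝ := deriv σ₂ z.im with ha2
  -- derivative of σ₁ ∘ re and σ₂ ∘ im
  have hA : HasFDerivAt (fun w : ℂ => σ₁ w.re) (a1 • Complex.reCLM) z :=
    ((h₁.differentiable one_ne_zero z.re).hasDerivAt).comp_hasFDerivAt z Complex.reCLM.hasFDerivAt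
  have hB : HasFDerivAt (fun w : ℂ => σ₂ w.im) (a2 • Complex.imCLM) z :=
    ((h₂.differentiable one_ne_zero z.im).hasDerivAt).comp_hasFDerivAt z Complex.imCLM.hasFDerivAt
  set σd : ℂ →L[ℝ] ℝ :=
    σ₁ z.re • (a2 • Complex.imCLM) + σ₂ z.im • (a1 • Complex.reCLM) with hσd
  have hσ' : HasFDerivAt (fun w : ℂ => σ₁ w.re * σ₂ w.im) σd z := hA.mul hB
  set r : ℝ := Real.sqrt (σ₁ z.re * σ₂ z.im) with hrdef
  have hrpos : 0 < r := Real.sqrt_pos.2 hs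
  have hr2 : r * r = σ₁ z.re * σ₂ z.im := Real.mul_self_sqrt hs.le
  have hsq : HasFDerivAt (fun w : ℂ => Real.sqrt (σ₁ w.re * σ₂ w.im))
      ((1 / (2 * r)) • σd) z :=
    (Real.hasDerivAt_sqrt hs.ne').comp_hasFDerivAt z hσ'
  -- second derivative of u
  have hu1 : ContDiff ℝ 1 (fderiv ℝ u) := hu.fderiv_right (by norm_num)
  set u'' : ℂ →L[ℝ] ℂ →L[ℝ] ℝ := fderiv ℝ (fderiv ℝ u) z with hu''def
  have hdfu : HasFDerivAt (fderiv ℝ u) u'' z := (hu1.differentiable one_ne_zero z).hasFDerivAt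
  have hux : HasFDerivAt (fun w => fderiv ℝ u w 1)
      ((ContinuousLinearMap.apply ℝ ℝ (1:ℂ)).comp u'') z :=
    (ContinuousLinearMap.apply ℝ ℝ (1:ℂ)).hasFDerivAt.comp z hdfu
  have huy : HasFDerivAt (fun w => fderiv ℝ u w Complex.I)
      ((ContinuousLinearMap.apply ℝ ℝ (Complex.I)).comp u'') z :=
    (ContinuousLinearMap.apply ℝ ℝ (Complex.I)).hasFDerivAt.comp z hdfu
  have hsym : u'' 1 Complex.I = u'' Complex.I 1 :=
    (hu.contDiffAt.isSymmSndFDerivAt (by norm_num)) 1 Complex.I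
  set ux : ℝ := fderiv ℝ u z 1 with huxv
  set uy : ℝ := fderiv ℝ u z Complex.I with huyv
  -- derivative of f = √σ · u_x and g = √σ · u_y
  set fd : ℂ →L[ℝ] ℝ :=
    r • ((ContinuousLinearMap.apply ℝ ℝ (1:ℂ)).comp u'') + ux • ((1 / (2 * r)) • σd) with hfd
  set gd : ℂ →L[ℝ] ℝ :=
    r • ((ContinuousLinearMap.apply ℝ ℝ (Complex.I)).comp u'') + uy • ((1 / (2 * r)) • σd)
    with hgd
  have hf : HasFDerivAt (fun w => Real.sqrt (σ₁ w.re * σ₂ w.im) * fderiv ℝ u w 1) fd z :=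
    hsq.mul hux
  have hg : HasFDerivAt (fun w => Real.sqrt (σ₁ w.re * σ₂ w.im) * fderiv ℝ u w Complex.I) gd z :=
    hsq.mul huy
  -- derivative of W
  set WD : ℂ →L[ℝ] ℂ :=
    Complex.ofRealCLM.comp fd - Complex.I • (Complex.ofRealCLM.comp gd) with hWD
  have hWd : HasFDerivAt (fun w => ((Real.sqrt (σ₁ w.re * σ₂ w.im) * fderiv ℝ u w 1 : ℝ) : ℂ)
      - Complex.I * ((Real.sqrt (σ₁ w.re * σ₂ w.im) * fderiv ℝ u w Complex.I : ℝ) : ℂ)) WD z :=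
    (Complex.ofRealCLM.hasFDerivAt.comp z hf).sub
      ((Complex.ofRealCLM.hasFDerivAt.comp z hg).const_mul Complex.I)
  -- derivative of p
  set q1 : ℝ := Real.sqrt (σ₁ z.re) with hq1def
  set q2 : ℝ := Real.sqrt (σ₂ z.im) with hq2def
  have hq1pos : 0 < q1 := Real.sqrt_pos.2 hs1
  have hq2pos : 0 < q2 := Real.sqrt_pos.2 hs2
  have hq1sq : q1 * q1 = σ₁ z.re := Real.mul_self_sqrt hs1.le
  have hq2sq : q2 * q2 = σ₂ z.im := Real.mul_self_sqrt hs2.le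
  have hrq : r = q1 * q2 := Real.sqrt_mul hs1.le _
  have hN : HasFDerivAt (fun w : ℂ => Real.sqrt (σ₂ w.im))
      ((1 / (2 * q2)) • (a2 • Complex.imCLM)) z :=
    (Real.hasDerivAt_sqrt hs2.ne').comp_hasFDerivAt z hB
  have hD : HasFDerivAt (fun w : ℂ => Real.sqrt (σ₁ w.re))
      ((1 / (2 * q1)) • (a1 • Complex.reCLM)) z :=
    (Real.hasDerivAt_sqrt hs1.ne').comp_hasFDerivAt z hA
  have hInv : HasFDerivAt (fun w : ℂ => (Real.sqrt (σ₁ w.re))⁻¹)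
      ((-(q1 ^ 2)⁻¹) • ((1 / (2 * q1)) • (a1 • Complex.reCLM))) z :=
    (hasDerivAt_inv hq1pos.ne').comp_hasFDerivAt z hD
  set pd : ℂ →L[ℝ] ℝ :=
    q2 • ((-(q1 ^ 2)⁻¹) • ((1 / (2 * q1)) • (a1 • Complex.reCLM)))
      + (q1)⁻¹ • ((1 / (2 * q2)) • (a2 • Complex.imCLM)) with hpd
  have hpder : HasFDerivAt (fun w : ℂ => Real.sqrt (σ₂ w.im) / Real.sqrt (σ₁ w.re)) pd z := by
    simp only [div_eq_mul_inv]
    exact hN.mul hInv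
  have hPd : HasFDerivAt (fun w : ℂ => ((Real.sqrt (σ₂ w.im) / Real.sqrt (σ₁ w.re) : ℝ) : ℂ))
      (Complex.ofRealCLM.comp pd) z := Complex.ofRealCLM.hasFDerivAt.comp z hpder
  -- the impedance equation at z, computed
  have himpz := himp z
  have hfσx : HasFDerivAt (fun w => (σ₁ w.re * σ₂ w.im) * fderiv ℝ u w 1)
      ((σ₁ z.re * σ₂ z.im) • ((ContinuousLinearMap.apply ℝ ℝ (1:ℂ)).comp u'') + ux • σd) z :=
    hσ'.mul hux
  have hfσy : HasFDerivAt (fun w => (σ₁ w.re * σ₂ w.im) * fderiv ℝ u w Complex.I)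
      ((σ₁ z.re * σ₂ z.im) • ((ContinuousLinearMap.apply ℝ ℝ (Complex.I)).comp u'') + uy • σd) z :=
    hσ'.mul huy
  rw [hfσx.fderiv, hfσy.fderiv] at himpz
  simp only [ContinuousLinearMap.add_apply, ContinuousLinearMap.smul_apply,
    ContinuousLinearMap.comp_apply, ContinuousLinearMap.apply_apply, hσd,
    Complex.reCLM_apply, Complex.imCLM_apply, Complex.one_re, Complex.one_im,
    Complex.I_re, Complex.I_im, smul_eq_mul] at himpz
  -- scalar evaluations
  have edσ : ∀ v : ℂ, σd v = σ₁ z.re * (a2 * v.im) + σ₂ z.im * (a1 * v.re) := by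
    intro v; rw [hσd]; simp only [ContinuousLinearMap.add_apply, ContinuousLinearMap.smul_apply, ContinuousLinearMap.comp_apply, ContinuousLinearMap.apply_apply, Complex.reCLM_apply, Complex.imCLM_apply, smul_eq_mul]
  have efd : ∀ v : ℂ, fd v = r * (u'' v 1) + ux * ((1 / (2 * r)) * σd v) := by
    intro v; rw [hfd]; simp only [ContinuousLinearMap.add_apply, ContinuousLinearMap.smul_apply, ContinuousLinearMap.comp_apply, ContinuousLinearMap.apply_apply, Complex.reCLM_apply, Complex.imCLM_apply, smul_eq_mul]
  have egd : ∀ v : ℂ, gd v = r * (u'' v Complex.I) + uy * ((1 / (2 * r)) * σd v) := by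
    intro v; rw [hgd]; simp only [ContinuousLinearMap.add_apply, ContinuousLinearMap.smul_apply, ContinuousLinearMap.comp_apply, ContinuousLinearMap.apply_apply, Complex.reCLM_apply, Complex.imCLM_apply, smul_eq_mul]
  have epd : ∀ v : ℂ, pd v = q2 * ((-(q1 ^ 2)⁻¹) * ((1 / (2 * q1)) * (a1 * v.re)))
      + q1⁻¹ * ((1 / (2 * q2)) * (a2 * v.im)) := by
    intro v; rw [hpd]; simp only [ContinuousLinearMap.add_apply, ContinuousLinearMap.smul_apply, ContinuousLinearMap.comp_apply, ContinuousLinearMap.apply_apply, Complex.reCLM_apply, Complex.imCLM_apply, smul_eq_mul, ContinuousLinearMap.sub_apply, ContinuousLinearMap.neg_apply]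
  have eWD : ∀ v : ℂ, WD v = ((fd v : ℝ) : ℂ) - Complex.I * ((gd v : ℝ) : ℂ) := by
    intro v; rw [hWD]; simp only [ContinuousLinearMap.sub_apply, ContinuousLinearMap.coe_smul', Pi.smul_apply, ContinuousLinearMap.comp_apply, Complex.ofRealCLM_apply, smul_eq_mul, Complex.real_smul]
  have ePD : ∀ v : ℂ, (Complex.ofRealCLM.comp pd) v = ((pd v : ℝ) : ℂ) := by
    intro v; simp
  -- rewrite the goal
  rw [hWd.fderiv, hPd.fderiv]
  rw [eWD 1, eWD Complex.I, ePD 1, ePD Complex.I, efd 1, efd Complex.I, egd 1,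
    egd Complex.I, epd 1, epd Complex.I, edσ 1, edσ Complex.I]
  have hpzne : ((q2 / q1 : ℝ) : ℂ) ≠ 0 := by
    exact_mod_cast (div_pos hq2pos hq1pos).ne'
  rw [sub_eq_zero, div_mul_eq_mul_div _ (((q2 / q1 : ℝ) : ℂ)), eq_div_iff hpzne, hsym]
  simp only [mul_one, mul_zero, add_zero, zero_add] at himpz
  simp only [Complex.one_re, Complex.one_im, Complex.I_re, Complex.I_im,
    mul_zero, mul_one, zero_add, add_zero]
  rw [← hq1sq, ← hq2sq] at himpz ⊢
  rw [hrq]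
  simp only [map_sub, map_mul, Complex.conj_ofReal, Complex.conj_I, Complex.ext_iff,
    Complex.add_re, Complex.add_im, Complex.sub_re, Complex.sub_im, Complex.mul_re,
    Complex.mul_im, Complex.I_re, Complex.I_im, Complex.ofReal_re, Complex.ofReal_im,
    Complex.div_re, Complex.div_im, mul_zero, mul_one, zero_mul, one_mul, zero_sub,
    sub_zero, zero_add, add_zero, neg_zero, neg_neg, Complex.neg_re, Complex.neg_im]
  constructor
  · field_simp
    linear_combination 2 * himpz
  · field_simp
    ring
end

section
/- Let α be a real constant, σ(x,y) = 1 + sin(α·x·y), and u(x,y) = (tan(α·x·y/2) + 1)⁻¹. Let Ω = {(x,y) ∈ ℝ² : cos(α·x·y/2) ≠ 0 and tan(α·x·y/2) + 1 ≠ 0}. Then u is a solution of the two-dimensional electrical impedance equation ∇·(σ∇u) = 0 at every point of Ω, i.e. ∂_x(σ ∂_x u) + ∂_y(σ ∂_y u) = 0 on Ω. -/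
open Real Filter

lemma inner_deriv_eq (c t : ℝ) (hc : Real.cos (c * t) ≠ 0) (ht : Real.tan (c * t) + 1 ≠ 0) :
    deriv (fun s : ℝ => (Real.tan (c * s) + 1)⁻¹) t
      = -((c / Real.cos (c * t) ^ 2) / (Real.tan (c * t) + 1) ^ 2) := by
  have h1 : HasDerivAt (fun s : ℝ => c * s) c t := by
    simpa using (hasDerivAt_id t).const_mul c
  have h2 : HasDerivAt (fun s : ℝ => Real.tan (c * s)) (1 / Real.cos (c * t) ^ 2 * c) t :=
    (Real.hasDerivAt_tan hc).comp t h1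
  have h3 : HasDerivAt (fun s : ℝ => Real.tan (c * s) + 1) (1 / Real.cos (c * t) ^ 2 * c) t :=
    h2.add_const 1
  have h4 : HasDerivAt (fun s : ℝ => (Real.tan (c * s) + 1)⁻¹) _ t := h3.inv ht
  rw [h4.deriv]
  field_simp

lemma sigma_eq (θ : ℝ) (hc : Real.cos θ ≠ 0) :
    1 + Real.sin (2 * θ) = Real.cos θ ^ 2 * (Real.tan θ + 1) ^ 2 := by
  rw [Real.tan_eq_sin_div_cos, Real.sin_two_mul]
  field_simp
  ring_nf
  nlinarith [Real.sin_sq_add_cos_sq θ]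

lemma prod_eventually_const (c t₀ : ℝ) (hc : Real.cos (c * t₀) ≠ 0)
    (ht : Real.tan (c * t₀) + 1 ≠ 0) :
    deriv (fun t : ℝ =>
      (1 + Real.sin (2 * (c * t))) * deriv (fun s : ℝ => (Real.tan (c * s) + 1)⁻¹) t) t₀ = 0 := by
  have hcont1 : ContinuousAt (fun t : ℝ => Real.cos (c * t)) t₀ :=
    (Real.continuous_cos.comp (continuous_const.mul continuous_id)).continuousAt
  have hcont2 : ContinuousAt (fun t : ℝ => Real.tan (c * t) + 1) t₀ := by
    have : ContinuousAt Real.tan (c * t₀) := Real.continuousAt_tan.2 hc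
    exact (this.comp ((continuous_const.mul continuous_id).continuousAt)).add continuousAt_const
  have e1 : ∀ᶠ t in nhds t₀, Real.cos (c * t) ≠ 0 := hcont1.eventually_ne hc
  have e2 : ∀ᶠ t in nhds t₀, Real.tan (c * t) + 1 ≠ 0 := hcont2.eventually_ne ht
  have heq : (fun t : ℝ =>
      (1 + Real.sin (2 * (c * t))) * deriv (fun s : ℝ => (Real.tan (c * s) + 1)⁻¹) t)
      =ᶠ[nhds t₀] fun _ => -c := by
    filter_upwards [e1, e2] with t h1 h2
    rw [inner_deriv_eq c t h1 h2, sigma_eq (c * t) h1]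
    field_simp
  rw [heq.deriv_eq]
  simp

/-- For `σ(x,y) = 1 + sin(αxy)`, the function `u(x,y) = (tan(αxy/2) + 1)⁻¹`
solves the two-dimensional electrical impedance equation `∂_x(σ ∂_x u) + ∂_y(σ ∂_y u) = 0`
at every point of `Ω = {(x,y) : cos(αxy/2) ≠ 0 ∧ tan(αxy/2) + 1 ≠ 0}`. -/
theorem impedance_solution_sinusoidal (α x y : ℝ)
    (hc : Real.cos (α * x * y / 2) ≠ 0) (ht : Real.tan (α * x * y / 2) + 1 ≠ 0) :
    deriv (fun x' : ℝ =>
        (1 + Real.sin (α * x' * y)) *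
          deriv (fun t : ℝ => (Real.tan (α * t * y / 2) + 1)⁻¹) x') x
      + deriv (fun y' : ℝ =>
        (1 + Real.sin (α * x * y')) *
          deriv (fun t : ℝ => (Real.tan (α * x * t / 2) + 1)⁻¹) y') y = 0 := by
  have hx : (fun x' : ℝ =>
        (1 + Real.sin (α * x' * y)) *
          deriv (fun t : ℝ => (Real.tan (α * t * y / 2) + 1)⁻¹) x')
      = (fun t : ℝ =>
        (1 + Real.sin (2 * (α * y / 2 * t))) *
          deriv (fun s : ℝ => (Real.tan (α * y / 2 * s) + 1)⁻¹) t) := by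
    funext t
    rw [show α * t * y = 2 * (α * y / 2 * t) by ring,
      show (fun s : ℝ => (Real.tan (α * s * y / 2) + 1)⁻¹)
        = fun s : ℝ => (Real.tan (α * y / 2 * s) + 1)⁻¹ from
        funext fun s => by rw [show α * s * y / 2 = α * y / 2 * s by ring]]
  have hy : (fun y' : ℝ =>
        (1 + Real.sin (α * x * y')) *
          deriv (fun t : ℝ => (Real.tan (α * x * t / 2) + 1)⁻¹) y')
      = (fun t : ℝ =>
        (1 + Real.sin (2 * (α * x / 2 * t))) *
          deriv (fun s : ℝ => (Real.tan (α * x / 2 * s) + 1)⁻¹) t) := by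
    funext t
    rw [show α * x * t = 2 * (α * x / 2 * t) by ring,
      show (fun s : ℝ => (Real.tan (α * x * s / 2) + 1)⁻¹)
        = fun s : ℝ => (Real.tan (α * x / 2 * s) + 1)⁻¹ from
        funext fun s => by rw [show α * x * s / 2 = α * x / 2 * s by ring]]
  rw [hx, hy,
    prod_eventually_const (α * y / 2) x (by rw [show α * y / 2 * x = α * x * y / 2 by ring]; exact hc)
      (by rw [show α * y / 2 * x = α * x * y / 2 by ring]; exact ht),
    prod_eventually_const (α * x / 2) y (by rw [show α * x / 2 * y = α * x * y / 2 by ring]; exact hc)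
      (by rw [show α * x / 2 * y = α * x * y / 2 by ring]; exact ht)]
  norm_num
end
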